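/- In a regular execution, if a process u never changes its color, then the execution has a suffix in which no neighbor of u changes its color; consequently, if some process keeps its color forever, the execution has a suffix where no process at all changes its color. -/
import Mathlib


namespace BFS

inductive Status : Type
  | Idle | Working | Power | WeakE | StrongE
deriving DecidableEq

open Status

inductive Rule (V : Type) : Type
  | RC1 | RC2 | RC3 | RC4 | RC5 | RC6
  | R1 | R2
  | R3 (v : V)
  | R4 | R5 | R6 | R7
deriving DecidableEq

structure ProcState (V : Type) where
  P : Option V
  TS : Option V
  C : Bool
  S : Status
  ph : Bool

abbrev Config (V : Type) := V → ProcState V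

variable {V : Type} [Fintype V] [DecidableEq V]

/-- Erroneous statuses. -/
def Erroneous (s : Status) : Prop := s = WeakE ∨ s = StrongE

/-- The children of `u`: neighbors whose parent pointer designates `u`. -/
def Child (G : SimpleGraph V) (c : Config V) (u : V) : Set V :=
  {v | G.Adj u v ∧ (c v).P = some u}

/-- Closed neighborhood `N[u]`. -/
def ClosedNbr (G : SimpleGraph V) (u : V) : Set V := insert u (G.neighborSet u)

def StrongConflict (G : SimpleGraph V) (c : Config V) (u : V) : Prop :=
  (c u).S ≠ StrongE ∧
    ∃ w ∈ ClosedNbr G u, ∃ v ∈ ClosedNbr G u,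
      (c v).C ≠ (c u).C ∧ (c w).S = Power ∧ (c v).S = Power

def Conflict (G : SimpleGraph V) (r : V) (c : Config V) (u : V) : Prop :=
  (u ≠ r ∧ (c u).P ≠ none ∧
      ∃ v ∈ G.neighborSet u, (c v).S = Power ∧ (c v).C ≠ (c u).C) ∨
  (u = r ∧ (c u).S ≠ StrongE ∧
      ∃ v ∈ G.neighborSet u, (c v).S = Power ∧
        ((c v).C ≠ (c u).C ∨ Child G c u = ∅))

def Detached (G : SimpleGraph V) (r : V) (c : Config V) (u : V) : Prop :=
  Child G c u = ∅ ∧ ((c u).P = none ∨ u = r) ∧ (c u).S ≠ Power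

def StrongEReady (G : SimpleGraph V) (c : Config V) (u : V) : Prop :=
  (c u).S = StrongE ∧ ∀ v ∈ G.neighborSet u, (c v).S ≠ Power

def PowerFaulty (G : SimpleGraph V) (c : Config V) (u : V) : Prop :=
  (c u).S = Power ∧ ∃ v ∈ G.neighborSet u, (c v).S = StrongE

def Faulty (G : SimpleGraph V) (r : V) (c : Config V) (u : V) : Prop :=
  u ≠ r ∧ ∃ p, (c u).P = some p ∧ ¬ Erroneous (c p).S ∧
    (Erroneous (c u).S ∨
     (c u).C ≠ (c p).C ∨
     ((c p).S ≠ Working ∧ (c u).S ≠ Idle) ∨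
     ((c p).S = (c u).S ∧ (c u).ph ≠ (c p).ph) ∨
     ((c u).S = Power ∧ (c u).ph ≠ (c p).ph) ∨
     ((c p).S = Power ∧ (Child G c u ≠ ∅ ∨ (c u).ph ≠ (c p).ph)))

def IllegalRoot (G : SimpleGraph V) (r : V) (c : Config V) (u : V) : Prop :=
  u ≠ r ∧ (c u).P = none ∧ ¬ Detached G r c u

def IllegalLiveRoot (G : SimpleGraph V) (r : V) (c : Config V) (u : V) : Prop :=
  IllegalRoot G r c u ∧ ¬ Erroneous (c u).S

def IllegalChild (r : V) (c : Config V) (u : V) : Prop :=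
  u ≠ r ∧ ∃ p, (c u).P = some p ∧ Erroneous (c p).S

def Isolated (G : SimpleGraph V) (c : Config V) (u : V) : Prop :=
  (c u).S = WeakE ∨ (c u).S = Working ∨ StrongEReady G c u

def Ok (G : SimpleGraph V) (r : V) (c : Config V) (u : V) : Prop :=
  ¬ StrongConflict G c u ∧ ¬ Conflict G r c u ∧ ¬ PowerFaulty G c u ∧
  ¬ Faulty G r c u ∧ ¬ IllegalRoot G r c u ∧ ¬ IllegalChild r c u

def QuietSubTree (G : SimpleGraph V) (c : Config V) (u : V) : Prop :=
  ∀ v ∈ Child G c u, (c v).S = Idle ∧ (c v).ph = (c u).ph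

def EndFirstPhase (G : SimpleGraph V) (c : Config V) (u : V) : Prop :=
  (c u).S = Power ∧ QuietSubTree G c u ∧ ∀ v ∈ G.neighborSet u, (c v).C = (c u).C

def EndPhase (G : SimpleGraph V) (c : Config V) (u : V) : Prop :=
  (c u).S = Working ∧ QuietSubTree G c u

def EndLastPhase (G : SimpleGraph V) (c : Config V) (u : V) : Prop :=
  Child G c u = ∅ ∧ (EndFirstPhase G c u ∨ EndPhase G c u)

def EndIntermediatePhase (G : SimpleGraph V) (c : Config V) (u : V) : Prop :=
  Child G c u ≠ ∅ ∧ (EndFirstPhase G c u ∨ EndPhase G c u)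

def Connection (G : SimpleGraph V) (r : V) (c : Config V) (u v : V) : Prop :=
  Detached G r c u ∧ (Isolated G c u ∨ (c u).S = Idle) ∧
  G.Adj u v ∧ (c v).C ≠ (c u).C ∧ (c v).S = Power

def NewPhase (G : SimpleGraph V) (c : Config V) (u : V) : Prop :=
  ∃ p, (c u).P = some p ∧ QuietSubTree G c u ∧ (c u).S = Idle ∧ (c u).ph ≠ (c p).ph

/-- Guards of the rules RC1–RC6, R1–R7 of the algorithm. -/
def Guard (G : SimpleGraph V) (r : V) : Rule V → Config V → V → Prop
  | .RC1, c, u => u = r ∧ ¬ Conflict G r c u ∧ PowerFaulty G c u ∧ QuietSubTree G c u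
  | .RC2, c, u => u = r ∧ Detached G r c u ∧ StrongEReady G c u
  | .RC3, c, u => u = r ∧ Conflict G r c u
  | .RC4, c, u => u ≠ r ∧ StrongConflict G c u
  | .RC5, c, u => u ≠ r ∧ ¬ StrongConflict G c u ∧
      (Conflict G r c u ∨ Faulty G r c u ∨ PowerFaulty G c u ∨
       IllegalLiveRoot G r c u ∨ IllegalChild r c u)
  | .RC6, c, u => u ≠ r ∧ Detached G r c u ∧ Isolated G c u ∧
      ∀ v ∈ G.neighborSet u, (c v).C = (c u).C ∨ (c v).S ≠ Power
  | .R1, c, u => u = r ∧ Ok G r c u ∧ EndLastPhase G c u ∧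
      ∀ v ∈ G.neighborSet u, (c v).S ≠ StrongE
  | .R2, c, u => u = r ∧ Ok G r c u ∧ EndIntermediatePhase G c u
  | .R3 v, c, u => u ≠ r ∧ Ok G r c u ∧ Connection G r c u v
  | .R4, c, u => u ≠ r ∧ Ok G r c u ∧ NewPhase G c u ∧ Child G c u ≠ ∅
  | .R5, c, u => u ≠ r ∧ Ok G r c u ∧ NewPhase G c u ∧ Child G c u = ∅ ∧
      ∀ v ∈ G.neighborSet u, (c v).S ≠ StrongE
  | .R6, c, u => u ≠ r ∧ Ok G r c u ∧ EndIntermediatePhase G c u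
  | .R7, c, u => u ≠ r ∧ Ok G r c u ∧ (c u).P ≠ none ∧ EndLastPhase G c u

/-- Phase of the parent of `u` (or `u`'s own phase if it has no parent). -/
def parentPh (c : Config V) (u : V) : Bool :=
  match (c u).P with
  | some p => (c p).ph
  | none => (c u).ph

/-- The action of each rule: the new local state of the executing process `u`. -/
def execRule (c : Config V) (u : V) : Rule V → ProcState V
  | .RC1 => { c u with S := Working }
  | .RC2 => { c u with S := Working }
  | .RC3 => { c u with S := StrongE }
  | .RC4 => { c u with S := StrongE, P := none }
  | .RC5 => { c u with S := WeakE, P := none }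
  | .RC6 => { c u with S := Idle }
  | .R1 => { c u with C := !(c u).C, S := Power }
  | .R2 => { c u with ph := !(c u).ph, S := Working }
  | .R3 v => { c u with C := (c v).C, ph := (c v).ph, S := Idle, P := some v, TS := some v }
  | .R4 => { c u with ph := parentPh c u, S := Working }
  | .R5 => { c u with ph := parentPh c u, S := Power }
  | .R6 => { c u with S := Idle }
  | .R7 => { c u with S := Idle, P := none }

/-- A computation step: a nonempty set of enabled processes each atomically
executes one enabled rule; all other processes keep their state. -/
def IsStep (G : SimpleGraph V) (r : V) (c1 : Config V)
    (act : V → Option (Rule V)) (c2 : Config V) : Prop :=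
  (∃ u ρ, act u = some ρ) ∧
  ∀ u, (act u = none → c2 u = c1 u) ∧
       ∀ ρ, act u = some ρ → Guard G r ρ c1 u ∧ c2 u = execRule c1 u ρ

def Step (G : SimpleGraph V) (r : V) (c1 c2 : Config V) : Prop :=
  ∃ act, IsStep G r c1 act c2

/-- A process is enabled if the guard of some rule holds at it. -/
def Enabled (G : SimpleGraph V) (r : V) (c : Config V) (u : V) : Prop :=
  ∃ ρ : Rule V, Guard G r ρ c u

/-- Well-formed configurations: pointers designate neighbors, and the root has
no parent and only uses the statuses Power, Working, StrongE. -/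
def WellFormed (G : SimpleGraph V) (r : V) (c : Config V) : Prop :=
  (∀ u v, (c u).P = some v → G.Adj u v) ∧
  (∀ u v, (c u).TS = some v → G.Adj u v) ∧
  (c r).P = none ∧ (c r).TS = none ∧
  ((c r).S = Power ∨ (c r).S = Working ∨ (c r).S = StrongE)

/-- `PowerParent u`: some descendant of `u` (possibly `u`) may take the `Power`
status by a series of R4/R5 moves. -/
inductive PowerParent (c : Config V) : V → Prop
  | base (u p : V) : (c u).P = some p → (c u).S = Idle → (c p).S = Working →
      (c u).ph ≠ (c p).ph → PowerParent c u
  | step (u p : V) : (c u).P = some p → PowerParent c p → (c u).S = Idle →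
      (c u).ph = (c p).ph → PowerParent c u

def Influential (c : Config V) (u : V) : Prop :=
  (c u).S = Power ∨ PowerParent c u

/-- `u` lies on a branch rooted at `r` all of whose members are non-faulty,
and the root is not StrongE. -/
inductive InLegalTree (G : SimpleGraph V) (r : V) (c : Config V) : V → Prop
  | root : (c r).S ≠ StrongE → InLegalTree G r c r
  | child (u p : V) : (c u).P = some p → InLegalTree G r c p →
      ¬ Faulty G r c u → InLegalTree G r c u

def InsideLegalTree (G : SimpleGraph V) (r : V) (c : Config V) (u : V) : Prop :=
  InLegalTree G r c u ∧ (c u).S ≠ Power ∧ Child G c u ≠ ∅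

def UnSafe (G : SimpleGraph V) (r : V) (c : Config V) (u : V) : Prop :=
  InsideLegalTree G r c u ∧
    ∃ v ∈ G.neighborSet u, (c v).C ≠ (c u).C ∧ Influential c v

def UnRegular (G : SimpleGraph V) (r : V) (c : Config V) (u : V) : Prop :=
  ¬ Detached G r c u ∧ ¬ InLegalTree G r c u

/-- Infinite executions of the algorithm (by Theorem `no deadlock` there is no
terminal configuration). -/
structure Execution (G : SimpleGraph V) (r : V) where
  conf : ℕ → Config V
  act : ℕ → V → Option (Rule V)
  valid : ∀ i, IsStep G r (conf i) (act i) (conf (i + 1))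

/-- The suffix of an execution starting at time `k`. -/
def Execution.shift {G : SimpleGraph V} {r : V} (e : Execution G r) (k : ℕ) :
    Execution G r where
  conf := fun i => e.conf (k + i)
  act := fun i => e.act (k + i)
  valid := fun i => e.valid (k + i)

/-- The first round of `e` is completed by time `t`: every process enabled in
the initial configuration has executed a rule or been neutralized before `t`. -/
def CompletesRound (G : SimpleGraph V) (r : V) (e : Execution G r) (t : ℕ) : Prop :=
  ∀ u, Enabled G r (e.conf 0) u →
    ∃ j, j < t ∧ (e.act j u ≠ none ∨ ¬ Enabled G r (e.conf (j + 1)) u)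

/-- `RoundsElapsed G r e k t`: at least `k` rounds of `e` are completed by time `t`. -/
def RoundsElapsed (G : SimpleGraph V) (r : V) (e : Execution G r) : ℕ → ℕ → Prop
  | 0, t => t = 0
  | k + 1, t => ∃ s, s ≤ t ∧ RoundsElapsed G r e k s ∧
      CompletesRound G r (e.shift s) (t - s)

/-- The tree-construction rules R1–R7. -/
def TreeRule : Rule V → Prop := fun ρ =>
  ρ = Rule.R1 ∨ ρ = Rule.R2 ∨ (∃ v, ρ = Rule.R3 v) ∨ ρ = Rule.R4 ∨
  ρ = Rule.R5 ∨ ρ = Rule.R6 ∨ ρ = Rule.R7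

noncomputable def FaultyCount (G : SimpleGraph V) (r : V) (c : Config V) : ℕ :=
  {u | Faulty G r c u}.ncard

/-- Inside-safe executions: insideLegalTree processes execute only R1–R7 and
the number of Faulty processes stays constant. -/
def InsideSafeExec (G : SimpleGraph V) (r : V) (e : Execution G r) : Prop :=
  (∀ i u ρ, InsideLegalTree G r (e.conf i) u → e.act i u = some ρ → TreeRule ρ) ∧
  (∀ i, FaultyCount G r (e.conf i) = FaultyCount G r (e.conf 0))

/-- Safe executions. -/
def SafeExec (G : SimpleGraph V) (r : V) (e : Execution G r) : Prop :=
  (∀ i u ρ, InsideLegalTree G r (e.conf i) u → e.act i u = some ρ → TreeRule ρ) ∧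
  (∀ i u, Influential (e.conf i) u → UnRegular G r (e.conf i) u → e.act i u = none) ∧
  (∀ i u, ¬ PowerFaulty G (e.conf i) u → ¬ PowerFaulty G (e.conf (i + 1)) u) ∧
  (∀ i u, e.act i u ≠ some Rule.RC1 ∧ e.act i u ≠ some Rule.RC4 ∧
      e.act i u ≠ some Rule.RC3 ∧ e.act i u ≠ some Rule.RC2)

/-- Pseudo-regular executions. -/
def PseudoRegularExec (G : SimpleGraph V) (r : V) (e : Execution G r) : Prop :=
  SafeExec G r e ∧
  (∀ i u ρ, InLegalTree G r (e.conf i) u → e.act i u = some ρ → TreeRule ρ) ∧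
  (∀ i u, ¬ UnRegular G r (e.conf i) u → ¬ UnRegular G r (e.conf (i + 1)) u)

/-- Regular executions: pseudo-regular and all processes execute only R1–R7. -/
def RegularExec (G : SimpleGraph V) (r : V) (e : Execution G r) : Prop :=
  PseudoRegularExec G r e ∧ (∀ i u ρ, e.act i u = some ρ → TreeRule ρ)

/-- `u` executes rules infinitely often along `e`. -/
def ActsInfOften {G : SimpleGraph V} {r : V} (e : Execution G r) (u : V) : Prop :=
  ∀ k, ∃ i, k ≤ i ∧ e.act i u ≠ none

def A1 (G : SimpleGraph V) (r : V) (c : Config V) : Prop :=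
  ∀ u, ¬ Faulty G r c u ∧ ¬ IllegalLiveRoot G r c u

def A2 (G : SimpleGraph V) (r : V) (c : Config V) : Prop :=
  A1 G r c ∧ ∀ u, ¬ UnSafe G r c u

def A3 (G : SimpleGraph V) (r : V) (c : Config V) : Prop :=
  A2 G r c ∧ ∀ u, ¬ Influential c u ∨ InLegalTree G r c u

def A4 (G : SimpleGraph V) (r : V) (c : Config V) : Prop :=
  A3 G r c ∧ ∀ u, (c u).S ≠ StrongE

def PIC (r : V) (c : Config V) (u : V) : Prop :=
  Influential c u ∧ (c u).C ≠ (c r).C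

def PICPowerParent (r : V) (c : Config V) (u : V) : Prop :=
  PIC r c u ∧ PowerParent c u


section Aux

variable {V : Type} [Fintype V] [DecidableEq V] {G : SimpleGraph V} {r : V}

/-- Any action by a Power process whose color differs from that of a
neighbor is impossible (among the tree rules). -/
private lemma guard_power_false {ρ : Rule V} {c : Config V} {u v : V}
    (htr : TreeRule ρ) (hg : Guard G r ρ c v) (hadj : G.Adj u v)
    (hS : (c v).S = Status.Power) (hC : (c u).C ≠ (c v).C) : False := by
  rcases htr with rfl | rfl | ⟨x, rfl⟩ | rfl | rfl | rfl | rfl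
  · -- R1
    obtain ⟨-, -, ⟨-, hend⟩, -⟩ := hg
    rcases hend with ⟨-, -, hcol⟩ | ⟨hW, -⟩
    · exact hC (hcol u hadj.symm)
    · rw [hS] at hW; exact Status.noConfusion hW
  · -- R2
    obtain ⟨-, -, -, hend⟩ := hg
    rcases hend with ⟨-, -, hcol⟩ | ⟨hW, -⟩
    · exact hC (hcol u hadj.symm)
    · rw [hS] at hW; exact Status.noConfusion hW
  · -- R3
    obtain ⟨-, -, hd, -⟩ := hg
    exact hd.2.2 hS
  · -- R4
    obtain ⟨-, -, ⟨p, -, -, hid, -⟩, -⟩ := hg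
    rw [hS] at hid; exact Status.noConfusion hid
  · -- R5
    obtain ⟨-, -, ⟨p, -, -, hid, -⟩, -, -⟩ := hg
    rw [hS] at hid; exact Status.noConfusion hid
  · -- R6
    obtain ⟨-, -, -, hend⟩ := hg
    rcases hend with ⟨-, -, hcol⟩ | ⟨hW, -⟩
    · exact hC (hcol u hadj.symm)
    · rw [hS] at hW; exact Status.noConfusion hW
  · -- R7
    obtain ⟨-, -, -, -, hend⟩ := hg
    rcases hend with ⟨-, -, hcol⟩ | ⟨hW, -⟩
    · exact hC (hcol u hadj.symm)
    · rw [hS] at hW; exact Status.noConfusion hW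

/-- If a childless non-root process `v` with parent, status not `Working`,
whose color differs from the color of its neighbor `u`, executes a tree
rule, then that rule is `R5`. -/
private lemma rule_eq_R5 {ρ : Rule V} {c : Config V} {u v : V}
    (htr : TreeRule ρ) (hg : Guard G r ρ c v) (hadj : G.Adj u v)
    (hvr : v ≠ r) (hP : (c v).P ≠ none) (hW : (c v).S ≠ Status.Working)
    (hch : ∀ y, ¬ (G.Adj v y ∧ (c y).P = some v))
    (hC : (c u).C ≠ (c v).C) : ρ = Rule.R5 := by
  have hchild : Child G c v = ∅ :=
    Set.eq_empty_iff_forall_notMem.mpr (fun y hy => hch y hy)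
  rcases htr with rfl | rfl | ⟨x, rfl⟩ | rfl | rfl | rfl | rfl
  · exact absurd hg.1 hvr
  · exact absurd hg.1 hvr
  · -- R3 : needs P = none or v = r
    obtain ⟨-, -, hd, -⟩ := hg
    rcases hd.2.1 with h | h
    · exact absurd h hP
    · exact absurd h hvr
  · -- R4 : needs a child
    exact absurd hchild hg.2.2.2
  · rfl
  · -- R6 : needs a child
    exact absurd hchild hg.2.2.1
  · -- R7
    obtain ⟨-, -, -, -, hend⟩ := hg
    rcases hend with ⟨-, -, hcol⟩ | ⟨hw, -⟩
    · exact absurd (hcol u hadj.symm) hC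
    · exact absurd hw hW

/-- Children can only appear at a `Power` process. -/
private lemma children_step (e : Execution G r) (hreg : RegularExec G r e)
    (i : ℕ) (v : V) (hS : (e.conf i v).S ≠ Status.Power)
    (hch : ∀ y, ¬ (G.Adj v y ∧ (e.conf i y).P = some v)) :
    ∀ y, ¬ (G.Adj v y ∧ (e.conf (i + 1) y).P = some v) := by
  rintro y ⟨hadj, hp⟩
  cases hact : e.act i y with
  | none =>
      rw [((e.valid i).2 y).1 hact] at hp
      exact hch y ⟨hadj, hp⟩
  | some ρ =>
      obtain ⟨hg, heq⟩ := ((e.valid i).2 y).2 ρ hact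
      have htr := hreg.2 i y ρ hact
      rw [heq] at hp
      rcases htr with rfl | rfl | ⟨z, rfl⟩ | rfl | rfl | rfl | rfl
      · exact hch y ⟨hadj, hp⟩
      · exact hch y ⟨hadj, hp⟩
      · -- R3 z : new parent z must have been Power
        have hz : z = v := by simpa [execRule] using hp
        obtain ⟨-, -, hconn⟩ := hg
        exact hS (hz ▸ hconn.2.2.2.2)
      · exact hch y ⟨hadj, hp⟩
      · exact hch y ⟨hadj, hp⟩
      · exact hch y ⟨hadj, hp⟩
      · simp [execRule] at hp

/-- A Power process adjacent to `u` whose color differs from the eventual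
color of `u` takes one frozen step. -/
private lemma freeze_step (e : Execution G r) (hreg : RegularExec G r e)
    {u v : V} {k : ℕ} {c₀ : Bool}
    (Hu : ∀ i, k ≤ i → (e.conf i u).C = c₀) (hadj : G.Adj u v)
    {s : ℕ} (hs : k ≤ s)
    (hP : (e.conf s v).S = Status.Power) (hC : (e.conf s v).C ≠ c₀) :
    e.conf (s + 1) v = e.conf s v := by
  cases hact : e.act s v with
  | none => exact ((e.valid s).2 v).1 hact
  | some ρ =>
      obtain ⟨hg, -⟩ := ((e.valid s).2 v).2 ρ hact
      exact (guard_power_false (hreg.2 s v ρ hact) hg hadj hP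
        (by rw [Hu s hs]; exact fun h => hC h.symm)).elim

/-- Such a process is frozen forever. -/
private lemma freeze_forever (e : Execution G r) (hreg : RegularExec G r e)
    {u v : V} {k : ℕ} {c₀ : Bool}
    (Hu : ∀ i, k ≤ i → (e.conf i u).C = c₀) (hadj : G.Adj u v)
    {j : ℕ} (hj : k ≤ j)
    (hP : (e.conf j v).S = Status.Power) (hC : (e.conf j v).C ≠ c₀) :
    ∀ s, j ≤ s → e.conf s v = e.conf j v := by
  intro s hs
  induction s, hs using Nat.le_induction with
  | base => rfl
  | succ s hs ih =>
      have h1 := freeze_step e hreg Hu hadj (le_trans hj hs)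
        (by rw [ih]; exact hP) (by rw [ih]; exact hC)
      rw [h1, ih]

/-- After joining a tree whose color differs from the eventual color of its
neighbor `u`, a process keeps its color forever. -/
private lemma wrong_color_persists (e : Execution G r) (hreg : RegularExec G r e)
    {u v : V} {k : ℕ} {c₀ : Bool}
    (Hu : ∀ i, k ≤ i → (e.conf i u).C = c₀) (hadj : G.Adj u v)
    {t : ℕ} {x : V} (ht : k ≤ t) (hact : e.act t v = some (Rule.R3 x))
    (hb : (e.conf t x).C ≠ c₀) :
    ∀ s, t + 1 ≤ s → (e.conf s v).C = (e.conf t x).C := by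
  obtain ⟨hg, heq⟩ := ((e.valid t).2 v).2 _ hact
  have hvr : v ≠ r := hg.1
  have hconn := hg.2.2
  have main : ∀ s, t + 1 ≤ s → (e.conf s v).C = (e.conf t x).C ∧
      ((e.conf s v).S = Status.Power ∨
        ((e.conf s v).P ≠ none ∧ (e.conf s v).S ≠ Status.Working ∧
          ∀ y, ¬ (G.Adj v y ∧ (e.conf s y).P = some v))) := by
    intro s hs
    induction s, hs using Nat.le_induction with
    | base =>
        refine ⟨by rw [heq]; rfl, Or.inr ⟨?_, ?_, ?_⟩⟩
        · rw [heq]; simp [execRule]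
        · rw [heq]; simp [execRule]
        · have h0 : ∀ y, ¬ (G.Adj v y ∧ (e.conf t y).P = some v) := by
            intro y hy
            exact (Set.eq_empty_iff_forall_notMem.mp hconn.1.1 y) hy
          exact children_step e hreg t v hconn.1.2.2 h0
    | succ s hs ih =>
        obtain ⟨hCb, hbr⟩ := ih
        by_cases hp : (e.conf s v).S = Status.Power
        · have hfr := freeze_step e hreg Hu hadj (by omega) hp
            (by rw [hCb]; exact hb)
          rw [hfr]
          exact ⟨hCb, Or.inl hp⟩
        · obtain ⟨hPne, hWne, hch⟩ := hbr.resolve_left hp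
          have hch' := children_step e hreg s v hp hch
          cases hact2 : e.act s v with
          | none =>
              rw [((e.valid s).2 v).1 hact2]
              exact ⟨hCb, Or.inr ⟨hPne, hWne, hch'⟩⟩
          | some ρ =>
              obtain ⟨hg2, heq2⟩ := ((e.valid s).2 v).2 ρ hact2
              have hCu : (e.conf s u).C ≠ (e.conf s v).C := by
                rw [Hu s (by omega), hCb]; exact fun h => hb h.symm
              have hρ := rule_eq_R5 (hreg.2 s v ρ hact2) hg2 hadj hvr
                hPne hWne hch hCu
              subst hρ
              rw [heq2]
              exact ⟨hCb, Or.inl rfl⟩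
  exact fun s hs => (main s hs).1

/-- A color change landing on a color different from the eventual color of a
neighbor is final. -/
private lemma change_final (e : Execution G r) (hreg : RegularExec G r e)
    {u v : V} {k : ℕ} {c₀ : Bool}
    (Hu : ∀ i, k ≤ i → (e.conf i u).C = c₀) (hadj : G.Adj u v)
    {t : ℕ} (ht : k ≤ t)
    (hch : (e.conf (t + 1) v).C ≠ (e.conf t v).C)
    (hnc : (e.conf (t + 1) v).C ≠ c₀) :
    ∀ s, t + 1 ≤ s → (e.conf s v).C = (e.conf (t + 1) v).C := by
  cases hact : e.act t v with
  | none => exact absurd (congrArg ProcState.C (((e.valid t).2 v).1 hact)) hch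
  | some ρ =>
      obtain ⟨hg, heq⟩ := ((e.valid t).2 v).2 ρ hact
      have htr := hreg.2 t v ρ hact
      rcases htr with rfl | rfl | ⟨x, rfl⟩ | rfl | rfl | rfl | rfl
      · -- R1 : becomes Power with the new color
        have hP1 : (e.conf (t + 1) v).S = Status.Power := by rw [heq]; rfl
        intro s hs
        rw [freeze_forever e hreg Hu hadj (by omega) hP1 hnc s hs]
      · exact absurd (by rw [heq]; rfl) hch
      · -- R3 x
        have hx : (e.conf (t + 1) v).C = (e.conf t x).C := by rw [heq]; rfl
        intro s hs
        rw [hx]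
        exact wrong_color_persists e hreg Hu hadj ht hact (hx ▸ hnc) s hs
      · exact absurd (by rw [heq]; rfl) hch
      · exact absurd (by rw [heq]; rfl) hch
      · exact absurd (by rw [heq]; rfl) hch
      · exact absurd (by rw [heq]; rfl) hch

/-- Key lemma: a neighbor of a process with eventually constant color
eventually stops changing its color. -/
private lemma nbr_const (e : Execution G r) (hreg : RegularExec G r e)
    {u v : V} (hadj : G.Adj u v) {k : ℕ} {c₀ : Bool}
    (Hu : ∀ i, k ≤ i → (e.conf i u).C = c₀) :
    ∃ m, ∀ s, m ≤ s → (e.conf (s + 1) v).C = (e.conf s v).C := by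
  by_contra hcon
  push_neg at hcon
  have CHG' : ∀ t, k ≤ t → (e.conf (t + 1) v).C ≠ (e.conf t v).C →
      (e.conf (t + 1) v).C = c₀ := by
    intro t ht hch
    by_contra hnc
    have hfin := change_final e hreg Hu hadj ht hch hnc
    obtain ⟨s, hs, hch2⟩ := hcon (t + 1)
    exact hch2 (by rw [hfin (s + 1) (by omega), hfin s hs])
  have extract : ∀ n s, k ≤ s → (e.conf s v).C = c₀ →
      (e.conf (s + n) v).C ≠ c₀ → False := by
    intro n
    induction n with
    | zero => intro s _ h1 h2; exact h2 h1
    | succ n ih =>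
        intro s hs h1 h2
        by_cases hmid : (e.conf (s + 1) v).C = c₀
        · exact ih (s + 1) (by omega) hmid
            (by rw [show s + 1 + n = s + (n + 1) by omega]; exact h2)
        · exact hmid (CHG' s hs (by rw [h1]; exact hmid))
  obtain ⟨t0, ht0, hch0⟩ := hcon k
  have hd0 : (e.conf (t0 + 1) v).C = c₀ := CHG' t0 ht0 hch0
  obtain ⟨t1, ht1, hch1⟩ := hcon (t0 + 1)
  have hd1 : (e.conf (t1 + 1) v).C = c₀ := CHG' t1 (by omega) hch1
  have hold : (e.conf t1 v).C ≠ c₀ := fun h => hch1 (hd1.trans h.symm)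
  exact extract (t1 - (t0 + 1)) (t0 + 1) (by omega) hd0
    (by rw [show t0 + 1 + (t1 - (t0 + 1)) = t1 by omega]; exact hold)

/-- Variant: the neighbor's color is eventually constant. -/
private lemma nbr_evconst (e : Execution G r) (hreg : RegularExec G r e)
    {u v : V} (hadj : G.Adj u v) {k : ℕ} {c₀ : Bool}
    (Hu : ∀ i, k ≤ i → (e.conf i u).C = c₀) :
    ∃ m c, ∀ i, m ≤ i → (e.conf i v).C = c := by
  obtain ⟨m, hm⟩ := nbr_const e hreg hadj Hu
  refine ⟨m, (e.conf m v).C, fun i hi => ?_⟩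
  induction i, hi using Nat.le_induction with
  | base => rfl
  | succ i hi ih => rw [hm i hi, ih]

end Aux

/-- in a regular execution, if `u` never changes its color then
some suffix has no color change at any neighbor of `u`; consequently some suffix
has no color change at any process at all. -/
theorem stmt11 {V : Type} [Fintype V] [DecidableEq V]
    (G : SimpleGraph V) (r : V) (hconn : G.Connected)
    (e : Execution G r) (hreg : RegularExec G r e)
    (u : V) (hu : ∀ i, (e.conf i u).C = (e.conf 0 u).C) :
    (∃ k, ∀ i, k ≤ i → ∀ v ∈ G.neighborSet u,
      (e.conf (i + 1) v).C = (e.conf i v).C) ∧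
    (∃ k, ∀ i, k ≤ i → ∀ w : V, (e.conf (i + 1) w).C = (e.conf i w).C) := by
  have evu : ∃ m c, ∀ i, m ≤ i → (e.conf i u).C = c :=
    ⟨0, (e.conf 0 u).C, fun i _ => hu i⟩
  have step : ∀ a b : V, G.Adj a b →
      (∃ m c, ∀ i, m ≤ i → (e.conf i a).C = c) →
      (∃ m c, ∀ i, m ≤ i → (e.conf i b).C = c) := by
    rintro a b hab ⟨m, c, hm⟩
    exact nbr_evconst e hreg hab hm
  constructor
  · -- Part 1: neighbors of u
    have H : ∀ v : V, ∃ m, ∀ s, m ≤ s → G.Adj u v →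
        (e.conf (s + 1) v).C = (e.conf s v).C := by
      intro v
      by_cases h : G.Adj u v
      · obtain ⟨m, hm⟩ := nbr_const e hreg h (k := 0) (c₀ := (e.conf 0 u).C) (fun i _ => hu i)
        exact ⟨m, fun s hs _ => hm s hs⟩
      · exact ⟨0, fun _ _ hadj => absurd hadj h⟩
    choose f hf using H
    exact ⟨Finset.univ.sup f, fun i hi v hv =>
      hf v i (le_trans (Finset.le_sup (Finset.mem_univ v)) hi) hv⟩
  · -- Part 2: all processes
    have key : ∀ (a b : V), G.Walk a b →
        (∃ m c, ∀ i, m ≤ i → (e.conf i a).C = c) →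
        (∃ m c, ∀ i, m ≤ i → (e.conf i b).C = c) := by
      intro a b p
      induction p with
      | nil => exact id
      | cons h q ih => exact fun ha => ih (step _ _ h ha)
    have main : ∀ w : V, ∃ m c, ∀ i, m ≤ i → (e.conf i w).C = c := by
      intro w
      obtain ⟨p⟩ := hconn.preconnected u w
      exact key u w p evu
    choose m c hmc using main
    refine ⟨Finset.univ.sup m, fun i hi w => ?_⟩
    have h1 := hmc w i (le_trans (Finset.le_sup (Finset.mem_univ w)) hi)
    have h2 := hmc w (i + 1)
      (le_trans (Finset.le_sup (Finset.mem_univ w)) (hi.trans (Nat.le_succ i)))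
    rw [h1, h2]

end BFS
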